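/- Let ν^±(λ) = -1 ± √(1+λ). There exist C, δ > 0 and a limiting operator value such that for all λ ∈ B(0,δ) to the right of the parabola {-k²+2ik : k∈ℝ} and all ξ ≥ 0, |ν^-(λ)e^{ν^-(λ)ξ} - ν^-(0)e^{ν^-(0)ξ}| ≤ C|λ|(1+ξ)e^{-ξ}. Here ν^-(0) = -2. -/

import Mathlib

/-- Stable spatial eigenvalue `ν⁻(λ) = -1 - √(1+λ)` of `∂ₓₓ + 2∂ₓ - λ`. -/
noncomputable def nuM (l : ℂ) : ℂ := -1 - (1 + l) ^ ((1:ℂ)/2)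

theorem stmt_18 :
    ∃ C > (0:ℝ), ∃ δ > (0:ℝ), ∀ l : ℂ, ‖l‖ < δ → -(l.im ^ 2) / 4 < l.re →
      ∀ ξ : ℝ, 0 ≤ ξ →
        ‖nuM l * Complex.exp (nuM l * ξ) - (-2) * Complex.exp (-2 * ξ)‖ ≤
          C * ‖l‖ * (1 + ξ) * Real.exp (-ξ) := by
  refine ⟨4, by norm_num, 1/2, by norm_num, fun l hl _ ξ hξ => ?_⟩
  set s : ℂ := (1 + l) ^ ((1:ℂ)/2) with hs
  have h1l : (1 + l) ≠ 0 := by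
    intro h
    have : ‖l‖ = 1 := by
      have : l = -1 := by linear_combination h
      simp [this]
    linarith
  -- s^2 = 1 + l
  have hs2 : s * s = 1 + l := by
    rw [hs, ← Complex.cpow_add _ _ h1l]
    norm_num
  -- Re s ≥ 0
  have hsre : 0 ≤ s.re := by
    rw [hs, show (1:ℂ)/2 = (2⁻¹ : ℂ) by norm_num, Complex.cpow_inv_two_re]
    exact Real.sqrt_nonneg _
  -- |s+1| ≥ 1
  have hsp1 : (1:ℝ) ≤ ‖s + 1‖ := by
    have := Complex.re_le_norm (s + 1)
    simp only [Complex.add_re, Complex.one_re] at this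
    linarith
  -- |s - 1| ≤ |l|
  have hkey : ‖s - 1‖ ≤ ‖l‖ := by
    have hmul : (s - 1) * (s + 1) = l := by linear_combination hs2
    have : ‖s - 1‖ * ‖s + 1‖ = ‖l‖ := by
      rw [← norm_mul, hmul]
    nlinarith [norm_nonneg (s - 1)]
  set a : ℂ := nuM l + 2 with ha
  have haeq : a = -(s - 1) := by simp [ha, nuM, hs]; ring
  have habs : ‖a‖ ≤ ‖l‖ := by rw [haeq, norm_neg]; exact hkey
  have habs' : ‖a‖ ≤ 1/2 := le_trans habs hl.le
  -- Re (nuM l) ≤ -3/2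
  have hnure : (nuM l).re ≤ -(3/2) := by
    have h1 : 1 - s.re ≤ ‖s - 1‖ := by
      have := Complex.re_le_norm (1 - s)
      simp only [Complex.sub_re, Complex.one_re] at this
      calc 1 - s.re ≤ ‖1 - s‖ := this
        _ = ‖s - 1‖ := by rw [← norm_neg]; ring_nf
    have : ‖s - 1‖ ≤ 1/2 := le_trans hkey hl.le
    have : (nuM l).re = -1 - s.re := by simp [nuM, hs]
    rw [this]; linarith
  -- decompose
  have hdecomp : nuM l * Complex.exp (nuM l * ξ) - (-2) * Complex.exp (-2 * ξ)
      = a * Complex.exp (nuM l * ξ)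
        + (-2) * (Complex.exp (-2 * ξ) * (Complex.exp (a * ξ) - 1)) := by
    have hexp : Complex.exp (nuM l * ξ) = Complex.exp (-2 * ξ) * Complex.exp (a * ξ) := by
      rw [← Complex.exp_add, ha]; ring_nf
    rw [hexp]; ring
  rw [hdecomp]
  have hE : ‖Complex.exp (nuM l * ξ)‖ ≤ Real.exp (-ξ) := by
    rw [Complex.norm_exp]
    apply Real.exp_le_exp.2
    have : (nuM l * ξ).re = (nuM l).re * ξ := by simp
    rw [this]
    nlinarith
  have hE0 : ‖Complex.exp (-2 * ξ)‖ = Real.exp (-2 * ξ) := by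
    rw [Complex.norm_exp]
    norm_num
  have haξ : ‖a * ξ‖ = ‖a‖ * ξ := by
    rw [norm_mul, Complex.norm_real, Real.norm_of_nonneg hξ]
  -- bound on |exp(aξ) - 1| * e^{-2ξ}
  have hterm2 : ‖Complex.exp (-2 * ξ)‖ * ‖Complex.exp (a * ξ) - 1‖
      ≤ 2 * ‖l‖ * ξ * Real.exp (-ξ) := by
    rw [hE0]
    rcases le_or_gt (‖a * ξ‖) 1 with hc | hc
    · have h1 := Complex.norm_exp_sub_one_le hc
      rw [haξ] at h1
      have h2 : Real.exp (-2 * ξ) ≤ Real.exp (-ξ) := Real.exp_le_exp.2 (by linarith)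
      calc Real.exp (-2 * ξ) * ‖Complex.exp (a * ξ) - 1‖
          ≤ Real.exp (-2 * ξ) * (2 * (‖a‖ * ξ)) := by
            exact mul_le_mul_of_nonneg_left h1 (Real.exp_nonneg _)
        _ ≤ Real.exp (-ξ) * (2 * (‖l‖ * ξ)) := by
            apply mul_le_mul h2 (by nlinarith [norm_nonneg a]) (by positivity)
              (Real.exp_nonneg _)
        _ = 2 * ‖l‖ * ξ * Real.exp (-ξ) := by ring
    · rw [haξ] at hc
      have h1 : ‖Complex.exp (a * ξ) - 1‖
          ≤ 2 * Real.exp (‖a‖ * ξ) := by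
        calc ‖Complex.exp (a * ξ) - 1‖
            ≤ ‖Complex.exp (a * ξ)‖ + 1 := by
              have := norm_sub_le (Complex.exp (a * ξ)) 1
              simpa using this
          _ ≤ Real.exp (‖a‖ * ξ) + 1 := by
              rw [Complex.norm_exp]
              have hre : (a * ξ).re ≤ ‖a‖ * ξ := by
                calc (a * ξ).re ≤ ‖a * ξ‖ := Complex.re_le_norm _
                  _ = ‖a‖ * ξ := haξ
              have := Real.exp_le_exp.2 hre
              linarith
          _ ≤ 2 * Real.exp (‖a‖ * ξ) := by
              nlinarith [Real.one_le_exp (show (0:ℝ) ≤ ‖a‖ * ξ by positivity)]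
      calc Real.exp (-2 * ξ) * ‖Complex.exp (a * ξ) - 1‖
          ≤ Real.exp (-2 * ξ) * (2 * Real.exp (‖a‖ * ξ)) :=
            mul_le_mul_of_nonneg_left h1 (Real.exp_nonneg _)
        _ = 2 * Real.exp (-2 * ξ + ‖a‖ * ξ) := by
            rw [Real.exp_add]; ring
        _ ≤ 2 * (‖a‖ * ξ) * Real.exp (-ξ) := by
            have h2 : Real.exp (-2 * ξ + ‖a‖ * ξ) ≤ Real.exp (-ξ) := by
              apply Real.exp_le_exp.2
              nlinarith [norm_nonneg a]
            nlinarith [Real.exp_nonneg (-2 * ξ + ‖a‖ * ξ), Real.exp_nonneg (-ξ : ℝ)]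
        _ ≤ 2 * ‖l‖ * ξ * Real.exp (-ξ) := by
            nlinarith [mul_le_mul_of_nonneg_right habs
              (mul_nonneg hξ (Real.exp_nonneg (-ξ : ℝ)))]
  calc ‖a * Complex.exp (nuM l * ξ)
        + (-2) * (Complex.exp (-2 * ξ) * (Complex.exp (a * ξ) - 1))‖
      ≤ ‖a * Complex.exp (nuM l * ξ)‖
        + ‖(-2 : ℂ) * (Complex.exp (-2 * ξ) * (Complex.exp (a * ξ) - 1))‖ :=
        norm_add_le _ _
    _ ≤ ‖l‖ * Real.exp (-ξ) + 2 * (2 * ‖l‖ * ξ * Real.exp (-ξ)) := by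
        have hb1 : ‖a * Complex.exp (nuM l * ξ)‖ ≤ ‖l‖ * Real.exp (-ξ) := by
          rw [norm_mul]
          exact mul_le_mul habs hE (norm_nonneg _) (norm_nonneg _)
        have hb2 : ‖(-2 : ℂ) * (Complex.exp (-2 * ξ) * (Complex.exp (a * ξ) - 1))‖
            ≤ 2 * (2 * ‖l‖ * ξ * Real.exp (-ξ)) := by
          rw [norm_mul, norm_mul]
          have h2 : ‖(-2 : ℂ)‖ = 2 := by simp
          rw [h2, norm_mul] at *
          nlinarith [hterm2]
        linarith
    _ ≤ 4 * ‖l‖ * (1 + ξ) * Real.exp (-ξ) := by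
        nlinarith [norm_nonneg l, Real.exp_nonneg (-ξ : ℝ)]
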